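/- Let x^k ∈ ℝ^{V×d} evolve as x^{k+1} = W_k x^k − γ g^k where each W_k satisfies the ergodic mixing property ‖W^{(m:k)} z − z̄‖² ≤ 2(1−ρ̄)^{2(k−m)} ‖z − z̄‖² for all z, W_k 𝟙 = 𝟙, and each row g^k_v of g^k satisfies ‖g^k_v‖ ≤ B with g^k_v = 0 except for v in a set I_k ⊆ V. If x^0 has all rows equal, then ∑_{k<K} ‖x^k − x̄^k‖² ≤ (2γ²B²/ρ̄²) ∑_{k<K} |I_k|. -/

import Mathlib

open Finset

/-- Squared distance to consensus of a vector `x ∈ ℝ^V`. -/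
noncomputable def consensusDist2 {V : Type*} [Fintype V] (x : V → ℝ) : ℝ :=
  ∑ v, (x v - (Fintype.card V : ℝ)⁻¹ * ∑ w, x w) ^ 2

lemma consensusDist2_le_sum_sq {V : Type*} [Fintype V] [Nonempty V] (z : V → ℝ) :
    consensusDist2 z ≤ ∑ v, z v ^ 2 := by
  have hn : (0:ℝ) < (Fintype.card V : ℝ) := by exact_mod_cast Fintype.card_pos
  unfold consensusDist2
  set c : ℝ := (Fintype.card V : ℝ)⁻¹ * ∑ w, z w with hc
  have hS : ∑ v, z v = (Fintype.card V : ℝ) * c := by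
    rw [hc]; field_simp
  have hexp : ∑ v, (z v - c) ^ 2
      = (∑ v, z v ^ 2) - 2 * c * (∑ v, z v) + (Fintype.card V : ℝ) * c ^ 2 := by
    have h : ∀ v : V, (z v - c) ^ 2 = z v ^ 2 - 2 * c * z v + c ^ 2 := fun v => by ring
    simp_rw [h]
    rw [Finset.sum_add_distrib, Finset.sum_sub_distrib, ← Finset.mul_sum, Finset.sum_const,
      nsmul_eq_mul, Finset.card_univ]
  rw [hexp, hS]
  nlinarith [sq_nonneg c, hn]

lemma geom_sum_le_inv {q : ℝ} (h0 : 0 ≤ q) (h1 : q < 1) (n : ℕ) :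
    ∑ j ∈ range n, q ^ j ≤ (1 - q)⁻¹ := by
  have h : q ≠ 1 := ne_of_lt h1
  have h1q : (0:ℝ) < 1 - q := by linarith
  rw [geom_sum_eq h]
  have e : (q ^ n - 1) / (q - 1) = (1 - q ^ n) / (1 - q) := by
    rw [← neg_div_neg_eq]; ring_nf
  rw [e, div_le_iff₀ h1q, inv_mul_cancel₀ (ne_of_gt h1q)]
  have := pow_nonneg h0 n
  linarith

lemma minkowski_sq {V : Type*} [Fintype V] {d : ℕ}
    (s : Finset ℕ) (z : ℕ → V → EuclideanSpace ℝ (Fin d)) :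
    ∑ v, ‖∑ m ∈ s, z m v‖ ^ 2 ≤ (∑ m ∈ s, Real.sqrt (∑ v, ‖z m v‖ ^ 2)) ^ 2 := by
  set F := PiLp 2 (fun _ : V => EuclideanSpace ℝ (Fin d))
  have hnorm : ∀ f : F, ‖f‖ ^ 2 = ∑ v, ‖f v‖ ^ 2 := fun f => PiLp.norm_sq_eq_of_L2 _ f
  set Z : ℕ → F := fun m => WithLp.toLp 2 (z m) with hZ
  have happ : ∀ v, (∑ m ∈ s, Z m) v = ∑ m ∈ s, z m v := fun v => by
    rw [WithLp.ofLp_sum, Finset.sum_apply v s]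
  have h1 : ∑ v, ‖∑ m ∈ s, z m v‖ ^ 2 = ‖∑ m ∈ s, Z m‖ ^ 2 := by
    rw [hnorm]
    exact Finset.sum_congr rfl fun v _ => by rw [happ]
  rw [h1]
  have h2 : ‖∑ m ∈ s, Z m‖ ≤ ∑ m ∈ s, Real.sqrt (∑ v, ‖z m v‖ ^ 2) := by
    refine (norm_sum_le s Z).trans (Finset.sum_le_sum fun m _ => ?_)
    rw [show ∑ v, ‖z m v‖ ^ 2 = ‖Z m‖ ^ 2 from (hnorm (Z m)).symm]
    rw [Real.sqrt_sq (norm_nonneg _)]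
  calc ‖∑ m ∈ s, Z m‖ ^ 2 ≤ (∑ m ∈ s, Real.sqrt (∑ v, ‖z m v‖ ^ 2)) ^ 2 := by
        apply pow_le_pow_left₀ (norm_nonneg _) h2

noncomputable def matVec {V : Type*} [Fintype V] {E : Type*} [AddCommMonoid E] [Module ℝ E]
    (M : Matrix V V ℝ) (f : V → E) : V → E := fun v => ∑ w, M v w • f w

lemma matVec_one {V : Type*} [Fintype V] [DecidableEq V] {E : Type*} [AddCommMonoid E] [Module ℝ E]
    (f : V → E) : matVec (1 : Matrix V V ℝ) f = f := by
  funext v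
  simp [matVec, Matrix.one_apply, ite_smul]

lemma matVec_mul {V : Type*} [Fintype V] {E : Type*} [AddCommMonoid E] [Module ℝ E]
    (A B : Matrix V V ℝ) (f : V → E) : matVec (A * B) f = matVec A (matVec B f) := by
  funext v
  simp only [matVec, Matrix.mul_apply, Finset.sum_smul, Finset.smul_sum, smul_smul]
  exact Finset.sum_comm

/-- Consensus control for AGRAF SGD with bounded gradients: under the ergodic
mixing property, the iterates `x^{k+1} = W_k x^k − γ g^k` with `‖g^k_v‖ ≤ B`
(and `g^k_v = 0` for `v ∉ I_k`) satisfy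
`∑_{k<K} ‖x^k − x̄^k‖² ≤ (2γ²B²/ρ̄²) ∑_{k<K} |I_k|`. -/
theorem agraf_consensus_control {V : Type*} [Fintype V] [DecidableEq V] [Nonempty V] {d : ℕ}
    (W : ℕ → Matrix V V ℝ) (P : ℕ → ℕ → Matrix V V ℝ)
    (hP0 : ∀ m, P m m = 1) (hPs : ∀ m k, P m (k + 1) = W k * P m k)
    (ρb : ℝ) (hρb0 : 0 < ρb) (hρb1 : ρb ≤ 1)
    (hones : ∀ k, (W k).mulVec (fun _ => (1 : ℝ)) = fun _ => 1)
    (hmix : ∀ m k, m ≤ k → ∀ z : V → ℝ,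
      consensusDist2 ((P m k).mulVec z) ≤ 2 * (1 - ρb) ^ (2 * (k - m)) * consensusDist2 z)
    (γ B : ℝ) (hγ : 0 ≤ γ) (hB : 0 ≤ B)
    (I : ℕ → Finset V)
    (g : ℕ → V → EuclideanSpace ℝ (Fin d))
    (hg0 : ∀ k v, v ∉ I k → g k v = 0)
    (hgB : ∀ k v, ‖g k v‖ ≤ B)
    (x : ℕ → V → EuclideanSpace ℝ (Fin d))
    (hx0 : ∀ v w, x 0 v = x 0 w)
    (hrec : ∀ k v, x (k + 1) v = (∑ w, W k v w • x k w) - γ • g k v)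
    (K : ℕ) :
    ∑ k ∈ Finset.range K,
        (∑ v, ‖x k v - (Fintype.card V : ℝ)⁻¹ • ∑ w, x k w‖ ^ 2)
      ≤ 2 * γ ^ 2 * B ^ 2 / ρb ^ 2 * ∑ k ∈ Finset.range K, ((I k).card : ℝ) := by
  classical
  obtain ⟨v0⟩ := (inferInstance : Nonempty V)
  have hq0 : (0:ℝ) ≤ 1 - ρb := by linarith
  have hq1 : 1 - ρb < 1 := by linarith
  have hnpos : (0:ℝ) < (Fintype.card V : ℝ) := by exact_mod_cast Fintype.card_pos
  have hWrow : ∀ k v, ∑ w, W k v w = 1 := by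
    intro k v
    have := congrFun (hones k) v
    simpa [Matrix.mulVec, dotProduct] using this
  have hProw : ∀ m k, m ≤ k → ∀ v, ∑ w, P m k v w = 1 := by
    intro m k hmk
    induction k, hmk using Nat.le_induction with
    | base => intro v; simp [hP0, Matrix.one_apply]
    | succ k hk ih =>
      intro v
      rw [hPs]
      simp only [Matrix.mul_apply]
      rw [Finset.sum_comm]
      have h2 : ∀ w : V, ∑ u, W k v w * P m k w u = W k v w := by
        intro w; rw [← Finset.mul_sum, ih w, mul_one]
      rw [Finset.sum_congr rfl (fun w _ => h2 w), hWrow]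
  -- representation of x k
  have hrep : ∀ k v, x k v
      = matVec (P 0 k) (x 0) v - γ • ∑ m ∈ range k, matVec (P (m+1) k) (g m) v := by
    intro k
    induction k with
    | zero => intro v; simp [hP0, matVec_one]
    | succ k ih =>
      intro v
      rw [hrec]
      have key : ∀ a b : V → EuclideanSpace ℝ (Fin d),
          ∑ w, W k v w • (a w - γ • b w) = matVec (W k) a v - γ • matVec (W k) b v := by
        intro a b
        simp only [matVec, smul_sub, Finset.sum_sub_distrib, Finset.smul_sum]
        congr 1
        exact Finset.sum_congr rfl fun w _ => by rw [smul_comm]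
      have h1 : ∑ w, W k v w • x k w
          = matVec (W k) (matVec (P 0 k) (x 0)) v
            - γ • matVec (W k) (fun w => ∑ m ∈ range k, matVec (P (m+1) k) (g m) w) v := by
        rw [← key]
        exact Finset.sum_congr rfl fun w _ => by rw [ih w]
      have hswap : matVec (W k) (fun w => ∑ m ∈ range k, matVec (P (m+1) k) (g m) w) v
          = ∑ m ∈ range k, matVec (W k) (matVec (P (m+1) k) (g m)) v := by
        simp only [matVec, Finset.smul_sum]
        exact Finset.sum_comm
      have hstep : ∀ m, matVec (W k) (matVec (P (m+1) k) (g m)) v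
          = matVec (P (m+1) (k+1)) (g m) v := by
        intro m; rw [hPs, matVec_mul]
      have hstep0 : matVec (W k) (matVec (P 0 k) (x 0)) v = matVec (P 0 (k+1)) (x 0) v := by
        rw [hPs, matVec_mul]
      have hglast : g k v = matVec (P (k+1) (k+1)) (g k) v := by
        rw [hP0, matVec_one]
      rw [h1, hswap, hstep0, Finset.sum_congr rfl (fun m _ => hstep m),
        Finset.sum_range_succ, ← hglast, smul_add]
      abel
  have hconst : ∀ k v, matVec (P 0 k) (x 0) v = x 0 v0 := by
    intro k v
    have h3 : ∀ w : V, (P 0 k) v w • x 0 w = (P 0 k) v w • x 0 v0 := fun w => by rw [hx0 w v0]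
    rw [matVec, Finset.sum_congr rfl (fun w _ => h3 w), ← Finset.sum_smul,
      hProw 0 k (Nat.zero_le k), one_smul]
  -- the consensus deviation identity
  have hDx : ∀ k v, x k v - (Fintype.card V : ℝ)⁻¹ • ∑ w, x k w
      = (-γ) • ∑ m ∈ range k, (matVec (P (m+1) k) (g m) v
          - (Fintype.card V : ℝ)⁻¹ • ∑ w, matVec (P (m+1) k) (g m) w) := by
    intro k v
    have hsum : ∑ w, x k w
        = (Fintype.card V : ℝ) • x 0 v0 - γ • ∑ w, ∑ m ∈ range k, matVec (P (m+1) k) (g m) w := by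
      rw [Finset.sum_congr rfl (fun w _ => by rw [hrep k w, hconst k w]),
        Finset.sum_sub_distrib, Finset.sum_const, Finset.card_univ, ← Finset.smul_sum,
        Nat.cast_smul_eq_nsmul]
    have hmean : (Fintype.card V : ℝ)⁻¹ • ∑ w, x k w
        = x 0 v0 - γ • ((Fintype.card V : ℝ)⁻¹ •
            ∑ w, ∑ m ∈ range k, matVec (P (m+1) k) (g m) w) := by
      rw [hsum, smul_sub, smul_smul, inv_mul_cancel₀ (ne_of_gt hnpos), one_smul, smul_comm]
    rw [hrep k v, hconst k v, hmean, Finset.sum_sub_distrib, ← Finset.smul_sum,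
      Finset.sum_comm, neg_smul, smul_sub]
    abel
  -- squared gradient sums
  have hSnn : ∀ m : ℕ, (0:ℝ) ≤ B ^ 2 * ((I m).card : ℝ) := fun m => mul_nonneg (sq_nonneg B) (Nat.cast_nonneg _)
  have hgsum : ∀ m, ∑ v, ‖g m v‖ ^ 2 ≤ B ^ 2 * ((I m).card : ℝ) := by
    intro m
    calc ∑ v, ‖g m v‖ ^ 2 = ∑ v ∈ I m, ‖g m v‖ ^ 2 := by
          refine (Finset.sum_subset (Finset.subset_univ _) ?_).symm
          intro v _ hv
          rw [hg0 m v hv]; simp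
      _ ≤ ∑ _v ∈ I m, B ^ 2 := Finset.sum_le_sum fun v _ =>
            pow_le_pow_left₀ (norm_nonneg _) (hgB m v) 2
      _ = B ^ 2 * ((I m).card : ℝ) := by rw [Finset.sum_const, nsmul_eq_mul]; ring
  -- bound on the deviation of each summand
  have hA : ∀ k m, m < k →
      ∑ v, ‖matVec (P (m+1) k) (g m) v
          - (Fintype.card V : ℝ)⁻¹ • ∑ w, matVec (P (m+1) k) (g m) w‖ ^ 2
        ≤ 2 * (1 - ρb) ^ (2 * (k - 1 - m)) * (B ^ 2 * ((I m).card : ℝ)) := by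
    intro k m hmk
    have hmv : ∀ (i : Fin d) (v' : V),
        matVec (P (m+1) k) (g m) v' i = (P (m+1) k).mulVec (fun w => g m w i) v' := by
      intro i v'
      show (∑ w, (P (m+1) k) v' w • g m w) i = _
      rw [WithLp.ofLp_sum, Finset.sum_apply i univ]
      rfl
    have hzi : ∀ (v' : V) (i : Fin d),
        (matVec (P (m+1) k) (g m) v'
          - (Fintype.card V : ℝ)⁻¹ • ∑ w, matVec (P (m+1) k) (g m) w) i
        = (P (m+1) k).mulVec (fun w => g m w i) v'
          - (Fintype.card V : ℝ)⁻¹ * ∑ w, (P (m+1) k).mulVec (fun w' => g m w' i) w := by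
      intro v' i
      have h4 : (∑ w, matVec (P (m+1) k) (g m) w) i = ∑ w, matVec (P (m+1) k) (g m) w i :=
        by rw [WithLp.ofLp_sum, Finset.sum_apply i univ]
      show matVec (P (m+1) k) (g m) v' i
          - (Fintype.card V : ℝ)⁻¹ * (∑ w, matVec (P (m+1) k) (g m) w) i = _
      rw [h4, hmv, Finset.sum_congr rfl (fun w _ => hmv i w)]
    have hnormsq : ∀ v' : V, ‖matVec (P (m+1) k) (g m) v'
          - (Fintype.card V : ℝ)⁻¹ • ∑ w, matVec (P (m+1) k) (g m) w‖ ^ 2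
        = ∑ i, ((matVec (P (m+1) k) (g m) v'
          - (Fintype.card V : ℝ)⁻¹ • ∑ w, matVec (P (m+1) k) (g m) w) i) ^ 2 := by
      intro v'
      rw [EuclideanSpace.norm_eq, Real.sq_sqrt (by positivity)]
      exact Finset.sum_congr rfl fun i _ => by rw [Real.norm_eq_abs, sq_abs]
    calc ∑ v, ‖matVec (P (m+1) k) (g m) v
            - (Fintype.card V : ℝ)⁻¹ • ∑ w, matVec (P (m+1) k) (g m) w‖ ^ 2
        = ∑ i, ∑ v, ((matVec (P (m+1) k) (g m) v
            - (Fintype.card V : ℝ)⁻¹ • ∑ w, matVec (P (m+1) k) (g m) w) i) ^ 2 := by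
          rw [Finset.sum_congr rfl (fun v _ => hnormsq v)]
          exact Finset.sum_comm
      _ = ∑ i, consensusDist2 ((P (m+1) k).mulVec (fun w => g m w i)) := by
          refine Finset.sum_congr rfl fun i _ => ?_
          unfold consensusDist2
          exact Finset.sum_congr rfl fun v _ => by rw [hzi v i]
      _ ≤ ∑ i, 2 * (1 - ρb) ^ (2 * (k - (m+1))) * consensusDist2 (fun w => g m w i) :=
          Finset.sum_le_sum fun i _ => hmix (m+1) k hmk (fun w => g m w i)
      _ ≤ ∑ i, 2 * (1 - ρb) ^ (2 * (k - 1 - m)) * ∑ v, (g m v i) ^ 2 := by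
          refine Finset.sum_le_sum fun i _ => ?_
          rw [show k - (m+1) = k - 1 - m by omega]
          refine mul_le_mul_of_nonneg_left (consensusDist2_le_sum_sq _) (by positivity)
      _ = 2 * (1 - ρb) ^ (2 * (k - 1 - m)) * ∑ v, ‖g m v‖ ^ 2 := by
          rw [← Finset.mul_sum, Finset.sum_comm]
          congr 1
          refine Finset.sum_congr rfl fun v _ => ?_
          rw [EuclideanSpace.norm_eq, Real.sq_sqrt (by positivity)]
          exact (Finset.sum_congr rfl fun i _ => by rw [Real.norm_eq_abs, sq_abs]).symm
      _ ≤ 2 * (1 - ρb) ^ (2 * (k - 1 - m)) * (B ^ 2 * ((I m).card : ℝ)) :=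
          mul_le_mul_of_nonneg_left (hgsum m) (by positivity)
  -- per-iteration bound
  have hT : ∀ k, ∑ v, ‖x k v - (Fintype.card V : ℝ)⁻¹ • ∑ w, x k w‖ ^ 2
      ≤ 2 * γ ^ 2 * ρb⁻¹ * ∑ m ∈ range k, (1 - ρb) ^ (k - 1 - m) * (B ^ 2 * ((I m).card : ℝ)) := by
    intro k
    have h5 : ∑ v, ‖x k v - (Fintype.card V : ℝ)⁻¹ • ∑ w, x k w‖ ^ 2
        = γ ^ 2 * ∑ v, ‖∑ m ∈ range k, (matVec (P (m+1) k) (g m) v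
            - (Fintype.card V : ℝ)⁻¹ • ∑ w, matVec (P (m+1) k) (g m) w)‖ ^ 2 := by
      rw [Finset.mul_sum]
      refine Finset.sum_congr rfl fun v _ => ?_
      rw [hDx k v, norm_smul, Real.norm_eq_abs, abs_neg, abs_of_nonneg hγ, mul_pow]
    rw [h5]
    have h6 := minkowski_sq (range k) (fun m v => matVec (P (m+1) k) (g m) v
        - (Fintype.card V : ℝ)⁻¹ • ∑ w, matVec (P (m+1) k) (g m) w)
    have h7 : ∑ m ∈ range k, Real.sqrt (∑ v, ‖matVec (P (m+1) k) (g m) v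
          - (Fintype.card V : ℝ)⁻¹ • ∑ w, matVec (P (m+1) k) (g m) w‖ ^ 2)
        ≤ Real.sqrt 2 * ∑ m ∈ range k,
            (1 - ρb) ^ (k - 1 - m) * Real.sqrt (B ^ 2 * ((I m).card : ℝ)) := by
      rw [Finset.mul_sum]
      refine Finset.sum_le_sum fun m hm => ?_
      have hup := hA k m (Finset.mem_range.mp hm)
      calc Real.sqrt (∑ v, ‖matVec (P (m+1) k) (g m) v
              - (Fintype.card V : ℝ)⁻¹ • ∑ w, matVec (P (m+1) k) (g m) w‖ ^ 2)
          ≤ Real.sqrt (2 * (1 - ρb) ^ (2 * (k - 1 - m)) * (B ^ 2 * ((I m).card : ℝ))) :=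
            Real.sqrt_le_sqrt hup
        _ = Real.sqrt 2 * ((1 - ρb) ^ (k - 1 - m) * Real.sqrt (B ^ 2 * ((I m).card : ℝ))) := by
            rw [show 2 * (1 - ρb) ^ (2 * (k - 1 - m)) * (B ^ 2 * ((I m).card : ℝ))
                = 2 * (((1 - ρb) ^ (k - 1 - m)) ^ 2 * (B ^ 2 * ((I m).card : ℝ))) by
              rw [← pow_mul]; ring_nf]
            rw [Real.sqrt_mul (by norm_num), Real.sqrt_mul (sq_nonneg _),
              Real.sqrt_sq (pow_nonneg hq0 _)]
    have hgseq : ∑ m ∈ range k, (1 - ρb) ^ (k - 1 - m) ≤ ρb⁻¹ := by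
      rw [Finset.sum_range_reflect (fun j => (1 - ρb) ^ j) k]
      have := geom_sum_le_inv hq0 hq1 k
      rwa [show (1:ℝ) - (1 - ρb) = ρb by ring] at this
    have hcs : (∑ m ∈ range k, (1 - ρb) ^ (k - 1 - m) * Real.sqrt (B ^ 2 * ((I m).card : ℝ))) ^ 2
        ≤ ρb⁻¹ * ∑ m ∈ range k, (1 - ρb) ^ (k - 1 - m) * (B ^ 2 * ((I m).card : ℝ)) := by
      have h8 := Finset.sum_mul_sq_le_sq_mul_sq (range k)
        (fun m => Real.sqrt (1 - ρb) ^ (k - 1 - m))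
        (fun m => Real.sqrt (1 - ρb) ^ (k - 1 - m) * Real.sqrt (B ^ 2 * ((I m).card : ℝ)))
      have e1 : ∀ m : ℕ, Real.sqrt (1 - ρb) ^ (k - 1 - m)
          * (Real.sqrt (1 - ρb) ^ (k - 1 - m) * Real.sqrt (B ^ 2 * ((I m).card : ℝ)))
          = (1 - ρb) ^ (k - 1 - m) * Real.sqrt (B ^ 2 * ((I m).card : ℝ)) := by
        intro m
        rw [← mul_assoc, ← pow_add, ← two_mul, pow_mul, Real.sq_sqrt hq0]
      have e2 : ∀ m : ℕ, (Real.sqrt (1 - ρb) ^ (k - 1 - m)) ^ 2 = (1 - ρb) ^ (k - 1 - m) := by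
        intro m
        rw [← pow_mul, mul_comm, pow_mul, Real.sq_sqrt hq0]
      have e3 : ∀ m : ℕ, (Real.sqrt (1 - ρb) ^ (k - 1 - m)
            * Real.sqrt (B ^ 2 * ((I m).card : ℝ))) ^ 2
          = (1 - ρb) ^ (k - 1 - m) * (B ^ 2 * ((I m).card : ℝ)) := by
        intro m
        rw [mul_pow, e2, Real.sq_sqrt (hSnn m)]
      rw [Finset.sum_congr rfl (fun m _ => e1 m), Finset.sum_congr rfl (fun m _ => e2 m),
        Finset.sum_congr rfl (fun m _ => e3 m)] at h8
      refine h8.trans ?_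
      refine mul_le_mul_of_nonneg_right hgseq ?_
      exact Finset.sum_nonneg fun m _ => mul_nonneg (pow_nonneg hq0 _) (hSnn m)
    calc γ ^ 2 * ∑ v, ‖∑ m ∈ range k, (matVec (P (m+1) k) (g m) v
            - (Fintype.card V : ℝ)⁻¹ • ∑ w, matVec (P (m+1) k) (g m) w)‖ ^ 2
        ≤ γ ^ 2 * (∑ m ∈ range k, Real.sqrt (∑ v, ‖matVec (P (m+1) k) (g m) v
            - (Fintype.card V : ℝ)⁻¹ • ∑ w, matVec (P (m+1) k) (g m) w‖ ^ 2)) ^ 2 :=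
          mul_le_mul_of_nonneg_left h6 (sq_nonneg γ)
      _ ≤ γ ^ 2 * (Real.sqrt 2 * ∑ m ∈ range k,
            (1 - ρb) ^ (k - 1 - m) * Real.sqrt (B ^ 2 * ((I m).card : ℝ))) ^ 2 := by
          refine mul_le_mul_of_nonneg_left ?_ (sq_nonneg γ)
          refine pow_le_pow_left₀ ?_ h7 2
          exact Finset.sum_nonneg fun m _ => Real.sqrt_nonneg _
      _ = γ ^ 2 * 2 * (∑ m ∈ range k,
            (1 - ρb) ^ (k - 1 - m) * Real.sqrt (B ^ 2 * ((I m).card : ℝ))) ^ 2 := by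
          rw [mul_pow, Real.sq_sqrt (by norm_num : (0:ℝ) ≤ 2)]
          ring
      _ ≤ γ ^ 2 * 2 * (ρb⁻¹ * ∑ m ∈ range k,
            (1 - ρb) ^ (k - 1 - m) * (B ^ 2 * ((I m).card : ℝ))) := by
          refine mul_le_mul_of_nonneg_left hcs (by positivity)
      _ = 2 * γ ^ 2 * ρb⁻¹ * ∑ m ∈ range k,
            (1 - ρb) ^ (k - 1 - m) * (B ^ 2 * ((I m).card : ℝ)) := by ring
  -- sum over k and swap the order of summation
  have hswapK : ∑ k ∈ range K, ∑ m ∈ range k,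
        (1 - ρb) ^ (k - 1 - m) * (B ^ 2 * ((I m).card : ℝ))
      = ∑ m ∈ range K, ∑ k ∈ Finset.Ico (m+1) K,
        (1 - ρb) ^ (k - 1 - m) * (B ^ 2 * ((I m).card : ℝ)) := by
    refine Finset.sum_comm' ?_
    intro k m
    simp only [Finset.mem_range, Finset.mem_Ico]
    omega
  have hinner : ∀ m, ∑ k ∈ Finset.Ico (m+1) K, (1 - ρb) ^ (k - 1 - m) ≤ ρb⁻¹ := by
    intro m
    rw [Finset.sum_Ico_eq_sum_range]
    have he : ∀ j : ℕ, (m + 1 + j) - 1 - m = j := by intro j; omega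
    rw [Finset.sum_congr rfl (fun j _ => by rw [he j])]
    have := geom_sum_le_inv hq0 hq1 (K - (m+1))
    rwa [show (1:ℝ) - (1 - ρb) = ρb by ring] at this
  calc ∑ k ∈ range K, ∑ v, ‖x k v - (Fintype.card V : ℝ)⁻¹ • ∑ w, x k w‖ ^ 2
      ≤ ∑ k ∈ range K, 2 * γ ^ 2 * ρb⁻¹ * ∑ m ∈ range k,
          (1 - ρb) ^ (k - 1 - m) * (B ^ 2 * ((I m).card : ℝ)) :=
        Finset.sum_le_sum fun k _ => hT k
    _ = 2 * γ ^ 2 * ρb⁻¹ * ∑ m ∈ range K, (∑ k ∈ Finset.Ico (m+1) K,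
          (1 - ρb) ^ (k - 1 - m)) * (B ^ 2 * ((I m).card : ℝ)) := by
        rw [← Finset.mul_sum, hswapK]
        congr 1
        exact Finset.sum_congr rfl fun m _ => by rw [Finset.sum_mul]
    _ ≤ 2 * γ ^ 2 * ρb⁻¹ * ∑ m ∈ range K, ρb⁻¹ * (B ^ 2 * ((I m).card : ℝ)) := by
        refine mul_le_mul_of_nonneg_left ?_ (by positivity)
        refine Finset.sum_le_sum fun m _ => ?_
        exact mul_le_mul_of_nonneg_right (hinner m) (hSnn m)
    _ = 2 * γ ^ 2 * B ^ 2 / ρb ^ 2 * ∑ k ∈ range K, ((I k).card : ℝ) := by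
        rw [Finset.mul_sum, Finset.mul_sum]
        refine Finset.sum_congr rfl fun m _ => ?_
        rw [div_eq_mul_inv]
        ring
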